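/- arXiv:2002.00079 — 5 statements merged into one kernel-verified Lean document; each statement's English description precedes it below -/
import Mathlib

section
/- Let a1, a2 be positive reals and let φ: ℝ → ℝ be a convex function differentiable at 0 with φ'(0) < 0. Define S(w) = a1·φ(w) + a2·φ(-w). If a1 > a2, then every global minimizer w* of S satisfies w* > 0. -/
/-- Pointwise Fisher consistency lemma: if `a1 > a2 > 0`, `φ` is convex,
differentiable at 0 with negative derivative there, then every global minimizer
of `S w = a1 * φ w + a2 * φ (-w)` is strictly positive. -/
theorem stmt_0 (a1 a2 : ℝ) (ha1 : 0 < a1) (ha2 : 0 < a2)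
    (φ : ℝ → ℝ) (hconv : ConvexOn ℝ Set.univ φ)
    (d : ℝ) (hd : HasDerivAt φ d 0) (hdneg : d < 0)
    (h12 : a2 < a1)
    (w : ℝ)
    (hmin : ∀ v : ℝ, a1 * φ w + a2 * φ (-w) ≤ a1 * φ v + a2 * φ (-v)) :
    0 < w := by
  set S : ℝ → ℝ := fun v => a1 * φ v + a2 * φ (-v) with hS
  -- S has derivative (a1 - a2) * d at 0
  have hd' : HasDerivAt φ d (-0 : ℝ) := by simpa using hd
  have hneg : HasDerivAt (fun v : ℝ => φ (-v)) (-d) 0 := by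
    have := HasDerivAt.comp (0 : ℝ) hd' (hasDerivAt_neg 0)
    simpa [Function.comp_def, mul_comm] using this
  have hSd : HasDerivAt S ((a1 - a2) * d) 0 := by
    have := (hd.const_mul a1).add (hneg.const_mul a2)
    rw [show (a1 - a2) * d = a1 * d + a2 * -d by ring]
    exact this
  have hDneg : (a1 - a2) * d < 0 :=
    mul_neg_of_pos_of_neg (by linarith) hdneg
  -- find v > 0 with S v < S 0
  have hslope : Filter.Tendsto (slope S 0) (nhdsWithin 0 {(0:ℝ)}ᶜ)
      (nhds ((a1 - a2) * d)) := hasDerivAt_iff_tendsto_slope.mp hSd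
  have hev : ∀ᶠ x in nhdsWithin 0 {(0:ℝ)}ᶜ, slope S 0 x < 0 :=
    hslope.eventually (Filter.Tendsto.eventually_lt_const hDneg Filter.tendsto_id)
  have hev' : ∀ᶠ x in nhdsWithin (0:ℝ) (Set.Ioi 0), slope S 0 x < 0 :=
    hev.filter_mono (nhdsWithin_mono 0 (fun x hx => by
      simp only [Set.mem_compl_iff, Set.mem_singleton_iff]
      exact ne_of_gt hx))
  obtain ⟨v, hv0, hvs⟩ := (hev'.and self_mem_nhdsWithin).exists
  have hvpos : (0:ℝ) < v := hvs
  have hSv : S v < S 0 := by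
    have h1 : slope S 0 v = (S v - S 0) / v := by
      simp [slope_def_field]
    rw [h1] at hv0
    rcases div_neg_iff.mp hv0 with ⟨_, h⟩ | ⟨h, _⟩
    · linarith
    · linarith
  -- now suppose w ≤ 0 and derive contradiction
  by_contra hwpos
  push_neg at hwpos
  have hSw : S w ≤ S v := hmin v
  rcases eq_or_lt_of_le hwpos with heq | hlt
  · subst heq
    linarith
  · -- w < 0 < v; convexity at 0 = t w + (1-t) v
    set t : ℝ := v / (v - w) with ht
    have hvw : (0:ℝ) < v - w := by linarith
    have ht0 : 0 < t := div_pos hvpos hvw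
    have ht1 : t < 1 := by
      rw [ht, div_lt_one hvw]; linarith
    have hcomb : t * w + (1 - t) * v = 0 := by
      rw [ht]
      field_simp
      ring
    have hφ1 : φ 0 ≤ t * φ w + (1 - t) * φ v := by
      have := hconv.2 (Set.mem_univ w) (Set.mem_univ v)
        ht0.le (show (0:ℝ) ≤ 1 - t by linarith) (show t + (1 - t) = 1 by ring)
      simpa [smul_eq_mul, hcomb] using this
    have hφ2 : φ 0 ≤ t * φ (-w) + (1 - t) * φ (-v) := by
      have hcomb' : t * (-w) + (1 - t) * (-v) = 0 := by linarith
      have := hconv.2 (Set.mem_univ (-w)) (Set.mem_univ (-v))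
        ht0.le (show (0:ℝ) ≤ 1 - t by linarith) (show t + (1 - t) = 1 by ring)
      simpa [smul_eq_mul, show -(t*w) + -((1-t)*v) = (0:ℝ) by linarith] using this
    have hS0 : S 0 ≤ t * S w + (1 - t) * S v := by
      simp only [hS, neg_zero]
      nlinarith [mul_le_mul_of_nonneg_left hφ1 ha1.le,
        mul_le_mul_of_nonneg_left hφ2 ha2.le]
    have h2 : t * S w + (1 - t) * S v ≤ S v := by nlinarith
    linarith
end

section
/- Let a1, a2 be positive reals and let φ: ℝ → ℝ be a convex function differentiable at 0 with φ'(0) < 0. Define S(w) = a1·φ(w) + a2·φ(-w). If a1 < a2, then every global minimizer w* of S satisfies w* < 0. -/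
lemma tangent_le (φ : ℝ → ℝ) (hconv : ConvexOn ℝ Set.univ φ)
    (d : ℝ) (hd : HasDerivAt φ d 0) (v : ℝ) : φ 0 + d * v ≤ φ v := by
  rcases lt_trichotomy v 0 with hv | hv | hv
  · have h := hconv.slope_le_of_hasDerivAt (Set.mem_univ v) (Set.mem_univ 0) hv hd
    rw [slope_def_field, div_le_iff₀ (by linarith)] at h
    · nlinarith
  · simp [hv]
  · have h := hconv.le_slope_of_hasDerivAt (Set.mem_univ 0) (Set.mem_univ v) hv hd
    rw [slope_def_field, le_div_iff₀ (by linarith)] at h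
    nlinarith

/-- Pointwise Fisher consistency lemma (mirror case): if `a2 > a1 > 0`,
`φ` convex, differentiable at 0 with negative derivative, then every global
minimizer of `S w = a1 * φ w + a2 * φ (-w)` is strictly negative. -/
theorem stmt_1 (a1 a2 : ℝ) (ha1 : 0 < a1) (ha2 : 0 < a2)
    (φ : ℝ → ℝ) (hconv : ConvexOn ℝ Set.univ φ)
    (d : ℝ) (hd : HasDerivAt φ d 0) (hdneg : d < 0)
    (h12 : a1 < a2)
    (w : ℝ)
    (hmin : ∀ v : ℝ, a1 * φ w + a2 * φ (-w) ≤ a1 * φ v + a2 * φ (-v)) :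
    w < 0 := by
  by_contra hw
  push_neg at hw
  -- S'(0) = (a1 - a2) * d > 0
  have hSd : HasDerivAt (fun v => a1 * φ v + a2 * φ (-v)) ((a1 - a2) * d) 0 := by
    have h1 : HasDerivAt (fun v : ℝ => φ (-v)) (d * (-1)) 0 := by
      have hd' : HasDerivAt φ d (-(0:ℝ)) := by simpa using hd
      exact hd'.comp 0 (hasDerivAt_neg 0)
    have := (hd.const_mul a1).add ((h1.const_mul a2))
    rw [show (a1 - a2) * d = a1 * d + a2 * (d * -1) by ring]
    exact this
  -- 0 is a global minimizer
  have h1 := tangent_le φ hconv d hd w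
  have h2 := tangent_le φ hconv d hd (-w)
  have hS0 : a1 * φ 0 + a2 * φ (-(0:ℝ)) ≤ a1 * φ w + a2 * φ (-w) := by
    simp only [neg_zero]
    nlinarith [mul_nonneg (mul_nonneg (sub_nonneg.2 h12.le) (neg_nonneg.2 hdneg.le)) hw,
      mul_le_mul_of_nonneg_left h1 ha1.le, mul_le_mul_of_nonneg_left h2 ha2.le]
  have hglob : ∀ v, a1 * φ 0 + a2 * φ (-(0:ℝ)) ≤ a1 * φ v + a2 * φ (-v) :=
    fun v => hS0.trans (hmin v)
  have hlocal : IsLocalMin (fun v => a1 * φ v + a2 * φ (-v)) 0 :=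
    Filter.Eventually.of_forall hglob
  have := hlocal.hasDerivAt_eq_zero hSd
  nlinarith
end

section
/- Let A ∈ {-1, +1} with P(A=1) = π ∈ (0,1), and let Y be an integrable real random variable. Define π_A = π if A=1 and 1-π otherwise. Then the function g ↦ E[(2YA - g)²/π_A] over constants g ∈ ℝ is uniquely minimized at g* = E[YA/π_A], and moreover g* = E[Y | A=1] - E[Y | A=-1]. -/
open MeasureTheory

/-- Scalar version of Proposition 2: the weighted least squares risk
`R g = E[(2 Y A - g)² / π_A]` is uniquely minimized at `g* = E[Y A / π_A]`,
and `g* = E[Y | A = 1] - E[Y | A = -1]`. -/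
theorem stmt_5 {Ω : Type*} [MeasurableSpace Ω] (μ : Measure Ω) [IsProbabilityMeasure μ]
    (A Y : Ω → ℝ) (hA : Measurable A) (hY : Measurable Y)
    (hAval : ∀ ω, A ω = 1 ∨ A ω = -1)
    (π : ℝ) (hπ0 : 0 < π) (hπ1 : π < 1)
    (hπ : μ {ω | A ω = 1} = ENNReal.ofReal π)
    (hYint : Integrable Y μ) (hY2int : Integrable (fun ω => (Y ω) ^ 2) μ)
    (πA : Ω → ℝ) (hπA : ∀ ω, πA ω = if A ω = 1 then π else 1 - π)
    (R : ℝ → ℝ) (hR : ∀ g, R g = ∫ ω, (2 * Y ω * A ω - g) ^ 2 / πA ω ∂μ)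
    (gstar : ℝ) (hgstar : gstar = ∫ ω, Y ω * A ω / πA ω ∂μ) :
    (∀ g : ℝ, g ≠ gstar → R gstar < R g) ∧
      gstar = (∫ ω in {ω | A ω = 1}, Y ω ∂μ) / π -
        (∫ ω in {ω | A ω = -1}, Y ω ∂μ) / (1 - π) := by
  set s : Set Ω := {ω | A ω = 1} with hs_def
  have hs : MeasurableSet s := hA (measurableSet_singleton 1)
  have hcompl : {ω | A ω = -1} = sᶜ := by
    ext ω
    simp only [Set.mem_compl_iff, hs_def, Set.mem_setOf_eq]
    rcases hAval ω with h | h <;> simp [h] <;> norm_num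
  have hπ1' : 0 < 1 - π := by linarith
  have hπA_pos : ∀ ω, 0 < πA ω := by
    intro ω; rw [hπA ω]; split <;> linarith
  have hc : 0 < min π (1 - π) := lt_min hπ0 hπ1'
  have hπA_ge : ∀ ω, min π (1 - π) ≤ πA ω := by
    intro ω; rw [hπA ω]; split
    · exact min_le_left _ _
    · exact min_le_right _ _
  have hπA_meas : Measurable πA := by
    have he : πA = fun ω => if A ω = 1 then π else 1 - π := funext hπA
    rw [he]
    exact Measurable.ite (hA (measurableSet_singleton 1)) measurable_const measurable_const
  have hinv_bound : ∀ ω, ‖(πA ω)⁻¹‖ ≤ (min π (1 - π))⁻¹ := by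
    intro ω
    rw [Real.norm_eq_abs, abs_of_pos (inv_pos.2 (hπA_pos ω))]
    exact inv_anti₀ hc (hπA_ge ω)
  have hdiv_int : ∀ h : Ω → ℝ, Integrable h μ → Integrable (fun ω => h ω / πA ω) μ := by
    intro h hh
    have := hh.bdd_mul (hπA_meas.inv.aestronglyMeasurable)
      (.of_forall hinv_bound)
    simpa [div_eq_mul_inv, mul_comm] using this
  -- splitting lemma
  have split : ∀ h : Ω → ℝ, Integrable h μ →
      ∫ ω, h ω / πA ω ∂μ = (∫ ω in s, h ω ∂μ) / π + (∫ ω in sᶜ, h ω ∂μ) / (1 - π) := by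
    intro h hh
    have heq : (fun ω => h ω / πA ω) =
        fun ω => s.indicator (fun ω => h ω / π) ω + sᶜ.indicator (fun ω => h ω / (1 - π)) ω := by
      funext ω
      by_cases hω : A ω = 1
      · have hωs : ω ∈ s := hω
        rw [Set.indicator_of_mem hωs, Set.indicator_of_notMem (by simp [hωs]), hπA ω,
          if_pos hω, add_zero]
      · have hωs : ω ∉ s := hω
        rw [Set.indicator_of_notMem hωs, Set.indicator_of_mem (Set.mem_compl hωs), hπA ω,
          if_neg hω, zero_add]
    rw [heq, integral_add ((hh.div_const π).indicator hs) ((hh.div_const (1 - π)).indicator hs.compl),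
      integral_indicator hs, integral_indicator hs.compl, integral_div, integral_div]
  -- integrability facts
  have hYA_int : Integrable (fun ω => Y ω * A ω) μ := by
    refine hYint.mono ((hY.mul hA).aestronglyMeasurable) (.of_forall fun ω => ?_)
    rcases hAval ω with h | h <;> simp [h, abs_mul]
  have hone_int : Integrable (fun _ : Ω => (1 : ℝ)) μ := integrable_const 1
  have hf1 : Integrable (fun ω => Y ω ^ 2 / πA ω) μ := hdiv_int _ hY2int
  have hf2 : Integrable (fun ω => Y ω * A ω / πA ω) μ := hdiv_int _ hYA_int
  have hf3 : Integrable (fun ω => (1 : ℝ) / πA ω) μ := hdiv_int _ hone_int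
  -- ∫ 1/πA = 2
  have hμs : (μ s).toReal = π := by rw [hπ]; exact ENNReal.toReal_ofReal hπ0.le
  have hμsc : (μ sᶜ).toReal = 1 - π := by
    rw [measure_compl hs (measure_ne_top μ s), measure_univ, hπ,
      ← ENNReal.ofReal_one, ← ENNReal.ofReal_sub _ hπ0.le]
    exact ENNReal.toReal_ofReal hπ1'.le
  have hItwo : ∫ ω, (1 : ℝ) / πA ω ∂μ = 2 := by
    rw [split _ hone_int]
    rw [setIntegral_const, setIntegral_const, smul_eq_mul, smul_eq_mul, mul_one, mul_one,
      measureReal_def, measureReal_def, hμs, hμsc, div_self hπ0.ne', div_self hπ1'.ne']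
    norm_num
  -- risk expansion
  have hRg : ∀ g : ℝ, R g = 4 * (∫ ω, Y ω ^ 2 / πA ω ∂μ) - 4 * g * gstar + g ^ 2 * 2 := by
    intro g
    rw [hR g]
    have heq : (fun ω => (2 * Y ω * A ω - g) ^ 2 / πA ω) =
        fun ω => 4 * (Y ω ^ 2 / πA ω) - 4 * g * (Y ω * A ω / πA ω) + g ^ 2 * ((1 : ℝ) / πA ω) := by
      funext ω
      have hnum : (2 * Y ω * A ω - g) ^ 2 = 4 * Y ω ^ 2 - 4 * g * (Y ω * A ω) + g ^ 2 := by
        rcases hAval ω with h | h <;> rw [h] <;> ring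
      rw [hnum]; ring
    have hsub : Integrable (fun ω => 4 * (Y ω ^ 2 / πA ω) - 4 * g * (Y ω * A ω / πA ω)) μ :=
      (hf1.const_mul 4).sub (hf2.const_mul (4 * g))
    rw [heq, integral_add hsub (hf3.const_mul (g ^ 2)),
      integral_sub (hf1.const_mul 4) (hf2.const_mul (4 * g)),
      integral_const_mul, integral_const_mul, integral_const_mul, hItwo, ← hgstar]
  -- second conclusion
  have hform : gstar = (∫ ω in s, Y ω ∂μ) / π - (∫ ω in sᶜ, Y ω ∂μ) / (1 - π) := by
    rw [hgstar, split _ hYA_int]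
    have h1 : ∫ ω in s, Y ω * A ω ∂μ = ∫ ω in s, Y ω ∂μ := by
      refine setIntegral_congr_fun hs fun ω hω => ?_
      have : A ω = 1 := hω
      simp [this]
    have h2 : ∫ ω in sᶜ, Y ω * A ω ∂μ = -∫ ω in sᶜ, Y ω ∂μ := by
      rw [← integral_neg]
      refine setIntegral_congr_fun hs.compl fun ω hω => ?_
      have : A ω = -1 := by
        rcases hAval ω with h | h
        · exact absurd h hω
        · exact h
      simp [this]
    rw [h1, h2]
    ring
  refine ⟨fun g hg => ?_, by rw [hform, hcompl]⟩
  have hdiff : R g - R gstar = 2 * (g - gstar) ^ 2 := by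
    rw [hRg g, hRg gstar]
    ring
  have hpos : 0 < (g - gstar) ^ 2 := by have h0 : g - gstar ≠ 0 := sub_ne_zero.2 hg; positivity
  linarith
end

section
/- Let A ∈ {-1,+1} with P(A=1)=π ∈ (0,1), Y nonnegative and integrable, and φ convex, differentiable at 0 with φ'(0)<0. Define π_A = π if A=1 and 1−π otherwise, and S(w) = E[Y·φ(A·w)/π_A]. If E[Y|A=1] ≠ E[Y|A=-1], then every minimizer w* of S over ℝ satisfies sign(w*) = sign(E[Y|A=1] − E[Y|A=-1]). -/
open MeasureTheory Filter Topology

private lemma aux_deriv_neg {f : ℝ → ℝ} {D : ℝ} (hf : HasDerivAt f D 0) (hD : D < 0) :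
    ∃ t > (0:ℝ), f t < f 0 := by
  rw [hasDerivAt_iff_tendsto_slope] at hf
  have h1 : ∀ᶠ t in 𝓝[≠] (0:ℝ), slope f 0 t < 0 := hf (Iio_mem_nhds hD)
  have h2 : ∀ᶠ t in 𝓝[>] (0:ℝ), slope f 0 t < 0 :=
    h1.filter_mono (nhdsWithin_mono 0 (fun x hx => ne_of_gt hx))
  obtain ⟨t, hslope, ht⟩ :=
    (h2.and (eventually_mem_nhdsWithin (s := Set.Ioi (0:ℝ)))).exists
  refine ⟨t, ht, ?_⟩
  rw [slope_def_field, sub_zero] at hslope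
  nlinarith [div_lt_iff₀ (show (0:ℝ) < t from ht) |>.mp hslope]

private lemma aux_deriv_pos {f : ℝ → ℝ} {D : ℝ} (hf : HasDerivAt f D 0) (hD : 0 < D) :
    ∃ t < (0:ℝ), f t < f 0 := by
  have hf' : HasDerivAt f D (-0) := by rwa [neg_zero]
  have hg : HasDerivAt (fun x => f (-x)) (-D) 0 := by
    have := hf'.comp 0 (hasDerivAt_neg (0:ℝ))
    simpa [mul_comm, Function.comp_def] using this
  obtain ⟨t, ht, hlt⟩ := aux_deriv_neg hg (by linarith)
  exact ⟨-t, by linarith, by simpa using hlt⟩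

private lemma aux_convex_min {f : ℝ → ℝ} (hf : ConvexOn ℝ Set.univ f)
    {w t : ℝ} (hmin : ∀ v, f w ≤ f v) (ht : 0 < t) (hlt : f t < f 0) : 0 < w := by
  by_contra hw
  push_neg at hw
  rcases eq_or_lt_of_le hw with h0 | h0
  · exact absurd (lt_of_le_of_lt (h0 ▸ hmin t) hlt) (lt_irrefl _)
  · set a := t / (t - w) with ha
    have htw : 0 < t - w := by linarith
    have ha0 : 0 < a := div_pos ht htw
    have ha1 : a < 1 := by rw [ha, div_lt_one htw]; linarith
    have hcomb : a * w + (1 - a) * t = 0 := by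
      rw [ha, div_mul_eq_mul_div, one_sub_div htw.ne', div_mul_eq_mul_div, ← add_div,
        div_eq_zero_iff]; left; ring
    have hcv := hf.2 (Set.mem_univ w) (Set.mem_univ t) (le_of_lt ha0)
      (by linarith : (0:ℝ) ≤ 1 - a) (by ring)
    simp only [smul_eq_mul] at hcv
    rw [hcomb] at hcv
    nlinarith [hmin t]

private lemma aux_convex_min' {f : ℝ → ℝ} (hf : ConvexOn ℝ Set.univ f)
    {w t : ℝ} (hmin : ∀ v, f w ≤ f v) (ht : t < 0) (hlt : f t < f 0) : w < 0 := by
  have hg : ConvexOn ℝ Set.univ (fun x => f (-x)) := by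
    constructor
    · exact convex_univ
    · intro x _ y _ a b ha hb hab
      simpa [neg_add, smul_neg, add_comm] using
        hf.2 (Set.mem_univ (-x)) (Set.mem_univ (-y)) ha hb hab
  have hgmin : ∀ v, (fun x => f (-x)) (-w) ≤ (fun x => f (-x)) v := by
    intro v
    simpa using hmin (-v)
  have := aux_convex_min hg hgmin (t := -t) (by linarith) (by simpa using hlt)
  linarith [this]

/-- Scalar Theorem 1 (Fisher consistency of OWL with convex surrogate loss):
for nonnegative `Y` and convex `φ` with `φ'(0) < 0`, any minimizer of
`S w = E[Y φ(A w) / π_A]` has the same sign as `E[Y|A=1] - E[Y|A=-1]`. -/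
theorem stmt_17 {Ω : Type*} [MeasurableSpace Ω] (μ : Measure Ω) [IsProbabilityMeasure μ]
    (A Y : Ω → ℝ) (hA : Measurable A) (hY : Measurable Y)
    (hAval : ∀ ω, A ω = 1 ∨ A ω = -1)
    (π : ℝ) (hπ0 : 0 < π) (hπ1 : π < 1)
    (hπ : μ {ω | A ω = 1} = ENNReal.ofReal π)
    (hYpos : ∀ ω, 0 ≤ Y ω) (hYint : Integrable Y μ)
    (φ : ℝ → ℝ) (hconv : ConvexOn ℝ Set.univ φ)
    (d : ℝ) (hd : HasDerivAt φ d 0) (hdneg : d < 0)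
    (πA : Ω → ℝ) (hπA : ∀ ω, πA ω = if A ω = 1 then π else 1 - π)
    (S : ℝ → ℝ) (hS : ∀ w, S w = ∫ ω, Y ω * φ (A ω * w) / πA ω ∂μ)
    (hne : (∫ ω in {ω | A ω = 1}, Y ω ∂μ) / π ≠
      (∫ ω in {ω | A ω = -1}, Y ω ∂μ) / (1 - π)) :
    ∀ w : ℝ, (∀ v : ℝ, S w ≤ S v) →
      Real.sign w = Real.sign ((∫ ω in {ω | A ω = 1}, Y ω ∂μ) / π -
        (∫ ω in {ω | A ω = -1}, Y ω ∂μ) / (1 - π)) := by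
  classical
  set s : Set Ω := {ω | A ω = 1} with hs_def
  have hs : MeasurableSet s := hA (measurableSet_singleton 1)
  have hsc : {ω | A ω = -1} = sᶜ := by
    ext ω
    rcases hAval ω with h | h <;> simp [hs_def, h] <;> norm_num
  set a1 : ℝ := (∫ ω in s, Y ω ∂μ) / π with ha1
  set a2 : ℝ := (∫ ω in {ω | A ω = -1}, Y ω ∂μ) / (1 - π) with ha2
  have ha1nn : 0 ≤ a1 :=
    div_nonneg (setIntegral_nonneg hs fun ω _ => hYpos ω) (le_of_lt hπ0)
  have ha2nn : 0 ≤ a2 :=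
    div_nonneg (setIntegral_nonneg (by rw [hsc]; exact hs.compl) fun ω _ => hYpos ω)
      (by linarith)
  -- S w = a1 * φ w + a2 * φ (-w)
  have hSrw : ∀ w, S w = a1 * φ w + a2 * φ (-w) := by
    intro w
    have hfun : (fun ω => Y ω * φ (A ω * w) / πA ω) =
        s.piecewise (fun ω => Y ω * (φ w / π)) (fun ω => Y ω * (φ (-w) / (1 - π))) := by
      funext ω
      rcases hAval ω with h | h
      · have hmem : ω ∈ s := h
        rw [Set.piecewise_eq_of_mem _ _ _ hmem, hπA ω, if_pos h, h]
        ring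
      · have hmem : ω ∉ s := by simp [hs_def, h]; norm_num
        have hne1 : A ω ≠ 1 := by rw [h]; norm_num
        rw [Set.piecewise_eq_of_notMem _ _ _ hmem, hπA ω, if_neg hne1, h]
        ring
    rw [hS w, hfun,
      integral_piecewise hs ((hYint.mul_const _).integrableOn)
        ((hYint.mul_const _).integrableOn),
      integral_mul_const, integral_mul_const]
    rw [ha1, ha2, ← hsc]
    ring
  -- derivative of S at 0
  have hφneg : HasDerivAt (fun x => φ (-x)) (-d) 0 := by
    have hd' : HasDerivAt φ d (-0) := by rwa [neg_zero]
    have := hd'.comp 0 (hasDerivAt_neg (0:ℝ))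
    simpa [mul_comm, Function.comp_def] using this
  have hSderiv : HasDerivAt S ((a1 - a2) * d) 0 := by
    have h1 : HasDerivAt (fun w => a1 * φ w + a2 * φ (-w)) (a1 * d + a2 * (-d)) 0 :=
      (hd.const_mul a1).add (hφneg.const_mul a2)
    have heq : (fun w => a1 * φ w + a2 * φ (-w)) = S := by
      funext w; rw [hSrw w]
    rw [heq] at h1
    convert h1 using 1
    ring
  -- convexity of S
  have hSconv : ConvexOn ℝ Set.univ S := by
    have heq : S = fun w => a1 * φ w + a2 * φ (-w) := by
      funext w; rw [hSrw w]
    rw [heq]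
    have hφn : ConvexOn ℝ Set.univ (fun x => φ (-x)) := by
      refine ⟨convex_univ, ?_⟩
      intro x _ y _ a b ha hb hab
      simpa [neg_add, smul_neg, add_comm] using
        hconv.2 (Set.mem_univ (-x)) (Set.mem_univ (-y)) ha hb hab
    exact (hconv.smul ha1nn).add (hφn.smul ha2nn)
  intro w hmin
  rcases lt_or_gt_of_ne hne with hlt | hgt
  · -- a1 < a2 : derivative (a1-a2)*d > 0, minimizer negative
    have hD : 0 < (a1 - a2) * d := mul_pos_of_neg_of_neg (by linarith) hdneg
    obtain ⟨t, ht, hStlt⟩ := aux_deriv_pos hSderiv hD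
    have hwneg : w < 0 := aux_convex_min' hSconv hmin ht hStlt
    rw [Real.sign_of_neg hwneg, Real.sign_of_neg (by linarith : a1 - a2 < 0)]
  · have hD : (a1 - a2) * d < 0 := mul_neg_of_pos_of_neg (by linarith) hdneg
    obtain ⟨t, ht, hStlt⟩ := aux_deriv_neg hSderiv hD
    have hwpos : 0 < w := aux_convex_min hSconv hmin ht hStlt
    rw [Real.sign_of_pos hwpos, Real.sign_of_pos (by linarith : 0 < a1 - a2)]
end

section
/- Let a1 > a2 > 0 and let φ(x) = (1−x)⁺ = max(1−x, 0) be the hinge loss. Define S(w) = a1·φ(w) + a2·φ(−w). Then S attains its minimum over ℝ at w* = 1, with S(1) = 2a2, and every minimizer w of S satisfies w ≥ 1 > 0. -/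
/-- Pointwise Fisher consistency for hinge loss OWL: with `a1 > a2 > 0` and
`φ(x) = max (1 - x) 0`, the risk `S w = a1 φ(w) + a2 φ(-w)` attains its
minimum at `w* = 1` with value `2 a2`, and every minimizer `w` satisfies
`w ≥ 1 > 0`. -/
theorem stmt_19 (a1 a2 : ℝ) (ha2 : 0 < a2) (h12 : a2 < a1)
    (φ : ℝ → ℝ) (hφ : ∀ x, φ x = max (1 - x) 0)
    (S : ℝ → ℝ) (hS : ∀ w, S w = a1 * φ w + a2 * φ (-w)) :
    S 1 = 2 * a2 ∧ (∀ w : ℝ, S 1 ≤ S w) ∧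
      (∀ w : ℝ, (∀ v : ℝ, S w ≤ S v) → 1 ≤ w ∧ 0 < w) := by
  have hS1 : S 1 = 2 * a2 := by
    rw [hS, hφ, hφ]; norm_num; ring
  have key : ∀ w, w < 1 → 2 * a2 < S w := by
    intro w hw
    rw [hS, hφ, hφ]
    rcases le_or_gt (-1) w with h | h
    · rw [max_eq_left (by linarith), max_eq_left (by linarith)]
      nlinarith
    · rw [max_eq_left (by linarith), max_eq_right (by linarith)]
      nlinarith
  refine ⟨hS1, ?_, ?_⟩
  · intro w
    rcases lt_or_ge w 1 with h | h
    · exact hS1 ▸ (key w h).le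
    · rw [hS1, hS, hφ, hφ]
      rw [max_eq_right (by linarith), max_eq_left (by linarith)]
      nlinarith
  · intro w hmin
    have := hmin 1
    rw [hS1] at this
    rcases lt_or_ge w 1 with h | h
    · exact absurd this (not_le.mpr (key w h))
    · exact ⟨h, by linarith⟩
end
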